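/- arXiv:0704.2868 — 2 statements merged into one kernel-verified Lean document; each statement's English description precedes it below -/
import Mathlib

section
/- Let G be a finite group acting transitively on a finite set M and A ⊆ M. Then there exists g ∈ G with |gA \ A| ≥ |A|·(1 − |A|/|M|). -/
open Finset

private lemma fiber_card_eq {G M : Type*} [Group G] [Fintype G] [Fintype M] [DecidableEq M]
    [MulAction G M] [MulAction.IsPretransitive G M] (b a a' : M) :
    (univ.filter (fun g : G => g • b = a)).card
      = (univ.filter (fun g : G => g • b = a')).card := by
  obtain ⟨h, hh⟩ := MulAction.exists_smul_eq G a a'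
  apply Finset.card_bij' (fun g _ => h * g) (fun g _ => h⁻¹ * g)
  · intro g hg
    simp only [mem_filter, mem_univ, true_and] at hg ⊢
    rw [mul_smul, hg, hh]
  · intro g hg
    simp only [mem_filter, mem_univ, true_and] at hg ⊢
    rw [mul_smul, hg, ← hh, inv_smul_smul]
  · intro g _; simp
  · intro g _; simp

private lemma fiber_card_mul {G M : Type*} [Group G] [Fintype G] [Fintype M] [DecidableEq M]
    [MulAction G M] [MulAction.IsPretransitive G M] (b a : M) :
    (univ.filter (fun g : G => g • b = a)).card * Fintype.card M = Fintype.card G := by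
  have h : (Fintype.card G) = ∑ x : M, (univ.filter (fun g : G => g • b = x)).card := by
    rw [← Finset.card_univ]
    exact Finset.card_eq_sum_card_fiberwise (fun g _ => mem_univ (g • b))
  rw [h, Finset.sum_congr rfl (fun x _ => fiber_card_eq (G := G) b x a),
    Finset.sum_const, Finset.card_univ, smul_eq_mul, mul_comm]

/-- For a finite group `G` acting transitively on a finite set `M` and `A ⊆ M`,
there exists `g ∈ G` with `|gA \ A| ≥ |A|·(1 − |A|/|M|)`. -/
theorem stmt_2 {G M : Type*} [Group G] [Fintype G] [Fintype M] [DecidableEq M]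
    [MulAction G M] [MulAction.IsPretransitive G M] (A : Finset M) :
    ∃ g : G, (((A.image (g • ·)) \ A).card : ℚ)
      ≥ (A.card : ℚ) * (1 - (A.card : ℚ) / (Fintype.card M : ℚ)) := by
  rcases A.eq_empty_or_nonempty with rfl | hA
  · exact ⟨1, by simp⟩
  have hMne : Nonempty M := ⟨hA.choose⟩
  have hMpos : 0 < Fintype.card M := Fintype.card_pos
  -- key counting identity
  have key : (∑ g : G, (A ∩ A.image (g • ·)).card) * Fintype.card M
      = A.card ^ 2 * Fintype.card G := by
    have h1 : ∀ g : G, A ∩ A.image (g • ·) = A.filter (fun x => g⁻¹ • x ∈ A) := by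
      intro g
      ext x
      simp only [mem_inter, mem_filter, mem_image]
      constructor
      · rintro ⟨hx, b, hb, rfl⟩
        exact ⟨hx, by simpa using hb⟩
      · rintro ⟨hx, hb⟩
        exact ⟨hx, g⁻¹ • x, hb, by simp⟩
    have h2 : (∑ g : G, (A ∩ A.image (g • ·)).card)
        = ∑ g : G, (A.filter (fun x => g • x ∈ A)).card := by
      rw [Finset.sum_congr rfl (fun g _ => by rw [h1 g])]
      exact Fintype.sum_equiv (Equiv.inv G) _ _ (fun g => rfl)
    have h3 : ∀ x : M, x ∈ A → (univ.filter (fun g : G => g • x ∈ A)).card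
        = ∑ a ∈ A, (univ.filter (fun g : G => g • x = a)).card := by
      intro x _
      rw [Finset.card_eq_sum_card_fiberwise
        (f := fun g : G => g • x) (s := univ.filter (fun g : G => g • x ∈ A)) (t := A)
        (fun g hg => Finset.mem_coe.mpr (mem_filter.mp (Finset.mem_coe.mp hg)).2)]
      refine Finset.sum_congr rfl (fun a ha => ?_)
      rw [Finset.filter_filter]
      congr 1
      ext g
      simp only [mem_filter, mem_univ, true_and]
      constructor
      · rintro ⟨_, h⟩; exact h
      · rintro h; exact ⟨h ▸ ha, h⟩
    calc (∑ g : G, (A ∩ A.image (g • ·)).card) * Fintype.card M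
        = (∑ g : G, ∑ x ∈ A, if g • x ∈ A then 1 else 0) * Fintype.card M := by
          rw [h2]; congr 1
          exact Finset.sum_congr rfl (fun g _ => by rw [Finset.card_filter])
      _ = (∑ x ∈ A, (univ.filter (fun g : G => g • x ∈ A)).card) * Fintype.card M := by
          rw [Finset.sum_comm]
          congr 1
          exact Finset.sum_congr rfl (fun x _ => by rw [Finset.card_filter])
      _ = ∑ x ∈ A, ∑ a ∈ A, (univ.filter (fun g : G => g • x = a)).card * Fintype.card M := by
          rw [Finset.sum_mul]
          exact Finset.sum_congr rfl (fun x hx => by rw [h3 x hx, Finset.sum_mul])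
      _ = ∑ x ∈ A, ∑ a ∈ A, Fintype.card G := by
          exact Finset.sum_congr rfl (fun x _ =>
            Finset.sum_congr rfl (fun a _ => fiber_card_mul x a))
      _ = A.card ^ 2 * Fintype.card G := by
          simp [Finset.sum_const, sq, mul_assoc]
  -- find a good g
  obtain ⟨g, -, hg⟩ : ∃ g ∈ (univ : Finset G),
      (A ∩ A.image (g • ·)).card * Fintype.card M ≤ A.card ^ 2 := by
    apply Finset.exists_le_of_sum_le Finset.univ_nonempty
    rw [← Finset.sum_mul, key, Finset.sum_const, Finset.card_univ, smul_eq_mul, mul_comm]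
  refine ⟨g, ?_⟩
  have hcard : ((A.image (g • ·)) \ A).card + (A ∩ A.image (g • ·)).card
      = A.card := by
    rw [inter_comm, Finset.card_sdiff_add_card_inter,
      Finset.card_image_of_injective _ (MulAction.injective g)]
  have hk : ((A ∩ A.image (g • ·)).card : ℚ) * (Fintype.card M : ℚ)
      ≤ (A.card : ℚ) ^ 2 := by exact_mod_cast hg
  have hMQ : (0 : ℚ) < (Fintype.card M : ℚ) := by exact_mod_cast hMpos
  have hk' : ((A ∩ A.image (g • ·)).card : ℚ)
      ≤ (A.card : ℚ) * ((A.card : ℚ) / (Fintype.card M : ℚ)) := by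
    rw [mul_div_assoc'] at *
    rw [le_div_iff₀ hMQ]
    nlinarith [hk]
  have hcQ : ((((A.image (g • ·)) \ A).card : ℚ))
      = (A.card : ℚ) - ((A ∩ A.image (g • ·)).card : ℚ) := by
    have := hcard
    push_cast [← this]
    ring
  rw [ge_iff_le, mul_one_sub, hcQ]
  linarith
end

section
/- Let G be a finite group acting transitively on a finite set M, let S be a generating set of G with |S| = n, and let A ⊆ M. Then there exists s ∈ S such that |sA \ A| ≥ (1/k)·|A|·(1 − |A|/|M|), where k is the minimal word length over S of some element g achieving |gA \ A| ≥ |A|(1 − |A|/|M|). In particular, if every element of G is a word of length at most n in S, there exists s ∈ S with |sA \ A| ≥ (1/n)·|A|·(1 − |A|/|M|). -/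
set_option linter.unusedSectionVars false

section AldousAux


open Finset

variable {G M : Type*} [Group G] [Fintype G] [Fintype M] [DecidableEq M]
    [DecidableEq G] [MulAction G M]

lemma aux_subadd (A : Finset M) (L : List G) :
    ((A.image (L.prod • ·)) \ A).card ≤
      (L.map (fun s => ((A.image (s • ·)) \ A).card)).sum := by
  induction L with
  | nil => simp
  | cons s t ih =>
      have himg : A.image ((s :: t).prod • ·) = (A.image (t.prod • ·)).image (s • ·) := by
        rw [Finset.image_image]
        simp only [List.prod_cons, mul_smul]
        rfl
      set X := A.image (t.prod • ·) with hX
      have hsub : X.image (s • ·) \ A ⊆ (X.image (s • ·) \ A.image (s • ·)) ∪ (A.image (s • ·) \ A) := by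
        intro x hx
        rw [Finset.mem_sdiff] at hx
        by_cases h : x ∈ A.image (s • ·)
        · exact Finset.mem_union_right _ (Finset.mem_sdiff.2 ⟨h, hx.2⟩)
        · exact Finset.mem_union_left _ (Finset.mem_sdiff.2 ⟨hx.1, h⟩)
      have hinj : Function.Injective (s • · : M → M) := MulAction.injective s
      have h1 : (X.image (s • ·) \ A.image (s • ·)).card = (X \ A).card := by
        rw [← Finset.image_sdiff _ _ hinj, Finset.card_image_of_injective _ hinj]
      calc ((A.image ((s :: t).prod • ·)) \ A).card
          = (X.image (s • ·) \ A).card := by rw [himg]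
        _ ≤ ((X.image (s • ·) \ A.image (s • ·)) ∪ (A.image (s • ·) \ A)).card :=
            Finset.card_le_card hsub
        _ ≤ (X.image (s • ·) \ A.image (s • ·)).card + (A.image (s • ·) \ A).card :=
            Finset.card_union_le _ _
        _ ≤ (A.image (s • ·) \ A).card + (t.map (fun s => ((A.image (s • ·)) \ A).card)).sum := by
            rw [h1]; omega
        _ = ((s :: t).map (fun s => ((A.image (s • ·)) \ A).card)).sum := by
            simp [add_comm]

lemma aux_cnt [MulAction.IsPretransitive G M] (b : M) (a a' : M) :
    (Finset.univ.filter (fun g : G => g • b = a)).card =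
      (Finset.univ.filter (fun g : G => g • b = a')).card := by
  obtain ⟨h, hh⟩ := MulAction.exists_smul_eq G a a'
  apply Finset.card_bij (fun g _ => h * g)
  · intro g hg
    rw [Finset.mem_filter] at hg ⊢
    exact ⟨Finset.mem_univ _, by rw [mul_smul, hg.2, hh]⟩
  · intro g₁ _ g₂ _ he
    exact mul_left_cancel he
  · intro g hg
    rw [Finset.mem_filter] at hg
    refine ⟨h⁻¹ * g, Finset.mem_filter.2 ⟨Finset.mem_univ _, ?_⟩, by group⟩
    rw [mul_smul, hg.2, ← hh, inv_smul_smul]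

lemma aux_cnt_mul [MulAction.IsPretransitive G M] (b : M) (a : M) :
    (Finset.univ.filter (fun g : G => g • b = a)).card * Fintype.card M = Fintype.card G := by
  have h : ∀ a' : M, (Finset.univ.filter (fun g : G => g • b = a')).card =
      (Finset.univ.filter (fun g : G => g • b = a)).card := fun a' => aux_cnt b a' a
  have : ∑ a' : M, (Finset.univ.filter (fun g : G => g • b = a')).card = Fintype.card G := by
    rw [← Finset.card_eq_sum_card_fiberwise (f := fun g : G => g • b)
      (s := Finset.univ) (t := Finset.univ) (fun g _ => Finset.mem_univ _)]
    exact Finset.card_univ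
  rw [← this, Finset.sum_congr rfl (fun a' _ => h a'), Finset.sum_const, Finset.card_univ,
    smul_eq_mul, mul_comm]

lemma aux_sum_inter [MulAction.IsPretransitive G M] (A : Finset M) :
    (∑ g : G, ((A.image (g • ·)) ∩ A).card) * Fintype.card M
      = A.card * A.card * Fintype.card G := by
  have step : ∀ g : G, ((A.image (g • ·)) ∩ A).card
      = ∑ a ∈ A, if a ∈ A.image (g • ·) then 1 else 0 := by
    intro g
    rw [Finset.inter_comm, ← Finset.filter_mem_eq_inter, Finset.card_filter]
  have inner : ∀ a : M, (∑ g : G, if a ∈ A.image (g • ·) then 1 else 0)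
      = ∑ b ∈ A, (Finset.univ.filter (fun g : G => g • b = a)).card := by
    intro a
    rw [← Finset.card_filter]
    have hset : Finset.univ.filter (fun g : G => a ∈ A.image (g • ·))
        = A.biUnion (fun b => Finset.univ.filter (fun g : G => g • b = a)) := by
      ext g
      simp [Finset.mem_image]
    rw [hset]
    apply Finset.card_biUnion
    intro b1 _ b2 _ hne
    rw [Function.onFun, Finset.disjoint_left]
    intro g hg1 hg2
    rw [Finset.mem_filter] at hg1 hg2
    exact hne (MulAction.injective g (hg1.2.trans hg2.2.symm))
  calc (∑ g : G, ((A.image (g • ·)) ∩ A).card) * Fintype.card M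
      = (∑ a ∈ A, ∑ g : G, if a ∈ A.image (g • ·) then 1 else 0) * Fintype.card M := by
        rw [Finset.sum_congr rfl (fun g _ => step g), Finset.sum_comm]
    _ = ∑ a ∈ A, ∑ b ∈ A, (Finset.univ.filter (fun g : G => g • b = a)).card * Fintype.card M := by
        rw [Finset.sum_mul]
        exact Finset.sum_congr rfl (fun a _ => by rw [inner a, Finset.sum_mul])
    _ = ∑ a ∈ A, ∑ b ∈ A, Fintype.card G := by
        exact Finset.sum_congr rfl (fun a _ => Finset.sum_congr rfl (fun b _ => aux_cnt_mul b a))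
    _ = A.card * A.card * Fintype.card G := by
        simp [Finset.sum_const, mul_assoc]

lemma aux_avg [MulAction.IsPretransitive G M] (A : Finset M)
    (hM : (0:ℚ) < (Fintype.card M : ℚ)) :
    ∃ g : G, (((A.image (g • ·)) \ A).card : ℚ)
      ≥ (A.card : ℚ) * (1 - (A.card : ℚ) / (Fintype.card M : ℚ)) := by
  have hsplit : ∀ g : G, ((A.image (g • ·)) \ A).card + ((A.image (g • ·)) ∩ A).card = A.card := by
    intro g
    rw [Finset.card_sdiff_add_card_inter, Finset.card_image_of_injective _ (MulAction.injective g)]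
  set D : ℚ := ∑ g : G, (((A.image (g • ·)) \ A).card : ℚ) with hD
  set I : ℚ := ∑ g : G, (((A.image (g • ·)) ∩ A).card : ℚ) with hI
  have hDI : D + I = (Fintype.card G : ℚ) * (A.card : ℚ) := by
    rw [hD, hI, ← Finset.sum_add_distrib]
    have : ∀ g : G, (((A.image (g • ·)) \ A).card : ℚ) + (((A.image (g • ·)) ∩ A).card : ℚ)
        = (A.card : ℚ) := by
      intro g; rw [← Nat.cast_add, hsplit g]
    rw [Finset.sum_congr rfl (fun g _ => this g), Finset.sum_const, Finset.card_univ,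
      nsmul_eq_mul]
  have hIM : I * (Fintype.card M : ℚ) = (A.card : ℚ) * (A.card : ℚ) * (Fintype.card G : ℚ) := by
    have := aux_sum_inter (G := G) A
    rw [hI, ← Nat.cast_sum]
    exact_mod_cast congrArg (Nat.cast : ℕ → ℚ) this
  have hMne : (Fintype.card M : ℚ) ≠ 0 := ne_of_gt hM
  have hGD : (Fintype.card G : ℚ) * ((A.card : ℚ) * (1 - (A.card : ℚ) / (Fintype.card M : ℚ))) = D := by
    have hIval : I = (A.card : ℚ) * (A.card : ℚ) * (Fintype.card G : ℚ) / (Fintype.card M : ℚ) := by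
      field_simp at hIM ⊢; linarith [hIM]
    have hDval : D = (Fintype.card G : ℚ) * (A.card : ℚ) - I := by linarith [hDI]
    rw [hDval, hIval]; field_simp
  have hne : (Finset.univ : Finset G).Nonempty := Finset.univ_nonempty
  have hle : ∑ _g : G, (A.card : ℚ) * (1 - (A.card : ℚ) / (Fintype.card M : ℚ))
      ≤ ∑ g : G, (((A.image (g • ·)) \ A).card : ℚ) := by
    rw [Finset.sum_const, Finset.card_univ, nsmul_eq_mul, hGD]
  obtain ⟨g, _, hg⟩ := Finset.exists_le_of_sum_le hne hle
  exact ⟨g, hg⟩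

lemma aux_list_sum_lt {α : Type*} (L : List α) (f : α → ℚ) (t : ℚ) (hne : L ≠ [])
    (h : ∀ x ∈ L, f x < t) : (L.map f).sum < L.length * t := by
  induction L with
  | nil => exact absurd rfl hne
  | cons a l ih =>
      rcases eq_or_ne l [] with rfl | hl
      · simpa using h a (by simp)
      · have h1 : f a < t := h a (by simp)
        have h2 : (l.map f).sum < l.length * t := ih hl (fun x hx => h x (List.mem_cons_of_mem _ hx))
        simp only [List.map_cons, List.sum_cons, List.length_cons]
        push_cast
        nlinarith

theorem stmt_3' {G M : Type*} [Group G] [Fintype G] [Fintype M] [DecidableEq M]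
    [DecidableEq G] [MulAction G M] [MulAction.IsPretransitive G M]
    (S : Finset G) (n : ℕ) (hn : 0 < n) (hS : S.card = n)
    (hgen : Subgroup.closure (S : Set G) = ⊤) (A : Finset M) :
    (∀ (g : G) (L : List G), (∀ x ∈ L, x ∈ S) → L.prod = g → L ≠ [] →
      (((A.image (g • ·)) \ A).card : ℚ)
          ≥ (A.card : ℚ) * (1 - (A.card : ℚ) / (Fintype.card M : ℚ)) →
      ∃ s ∈ S, (((A.image (s • ·)) \ A).card : ℚ)
          ≥ (1 / (L.length : ℚ)) * (A.card : ℚ)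
              * (1 - (A.card : ℚ) / (Fintype.card M : ℚ)))
    ∧ ((∀ g : G, ∃ L : List G, (∀ x ∈ L, x ∈ S) ∧ L.length ≤ n ∧ L.prod = g) →
      ∃ s ∈ S, (((A.image (s • ·)) \ A).card : ℚ)
          ≥ (1 / (n : ℚ)) * (A.card : ℚ)
              * (1 - (A.card : ℚ) / (Fintype.card M : ℚ))) := by
  set X : ℚ := 1 - (A.card : ℚ) / (Fintype.card M : ℚ) with hX
  have key : ∀ (g : G) (L : List G), (∀ x ∈ L, x ∈ S) → L.prod = g → L ≠ [] →
      (((A.image (g • ·)) \ A).card : ℚ) ≥ (A.card : ℚ) * X →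
      ∃ s ∈ S, (((A.image (s • ·)) \ A).card : ℚ)
          ≥ (1 / (L.length : ℚ)) * (A.card : ℚ) * X := by
    intro g L hLS hLp hLne hge
    by_contra hcon
    push_neg at hcon
    have hk : (0:ℚ) < (L.length : ℚ) := by
      have := List.length_pos_iff.2 hLne
      exact_mod_cast this
    have hsub := aux_subadd A L
    rw [hLp] at hsub
    have hsubQ : (((A.image (g • ·)) \ A).card : ℚ)
        ≤ (L.map (fun s => ((((A.image (s • ·)) \ A).card : ℕ) : ℚ))).sum := by
      have : ((L.map (fun s => ((A.image (s • ·)) \ A).card)).sum : ℚ)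
          = (L.map (fun s => ((((A.image (s • ·)) \ A).card : ℕ) : ℚ))).sum := by
        rw [Nat.cast_list_sum, List.map_map]
        rfl
      rw [← this]
      exact_mod_cast hsub
    have hlt : (L.map (fun s => ((((A.image (s • ·)) \ A).card : ℕ) : ℚ))).sum
        < (L.length : ℚ) * (1 / (L.length : ℚ) * (A.card : ℚ) * X) := by
      apply aux_list_sum_lt _ _ _ hLne
      intro x hx
      exact hcon x (hLS x hx)
    have heq : (L.length : ℚ) * (1 / (L.length : ℚ) * (A.card : ℚ) * X) = (A.card : ℚ) * X := by
      field_simp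
    rw [heq] at hlt
    linarith
  refine ⟨key, ?_⟩
  intro h
  by_cases hc : (A.card : ℚ) * X ≤ 0
  · obtain ⟨s, hs⟩ := Finset.card_pos.mp (by rw [hS]; exact hn)
    refine ⟨s, hs, ?_⟩
    have h1 : 1 / (n : ℚ) * (A.card : ℚ) * X ≤ 0 := by
      rw [mul_assoc]
      apply mul_nonpos_of_nonneg_of_nonpos _ hc
      positivity
    have h2 : (0:ℚ) ≤ (((A.image (s • ·)) \ A).card : ℚ) := Nat.cast_nonneg _
    linarith
  · push_neg at hc
    have hAc : (0:ℚ) < (A.card : ℚ) := by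
      rcases lt_or_eq_of_le (Nat.cast_nonneg (α := ℚ) A.card) with h' | h'
      · exact h'
      · rw [← h'] at hc; simp at hc
    have hXpos : 0 < X := by
      by_contra hX0
      push_neg at hX0
      nlinarith
    have hApos : 0 < A.card := by exact_mod_cast hAc
    obtain ⟨a, ha⟩ := Finset.card_pos.mp hApos
    have : Nonempty M := ⟨a⟩
    have hM : (0:ℚ) < (Fintype.card M : ℚ) := by exact_mod_cast Fintype.card_pos
    obtain ⟨g, hg⟩ := aux_avg (G := G) A hM
    obtain ⟨L, hLS, hLlen, hLp⟩ := h g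
    have hLne : L ≠ [] := by
      intro hnil
      rw [hnil] at hLp
      simp at hLp
      rw [← hLp] at hg
      simp only [one_smul] at hg
      rw [Finset.image_id'] at hg
      simp at hg
      rw [← hX] at hg
      linarith
    obtain ⟨s, hsS, hsge⟩ := key g L hLS hLp hLne hg
    refine ⟨s, hsS, le_trans ?_ hsge⟩
    have hlen : (0:ℚ) < (L.length : ℚ) := by
      exact_mod_cast List.length_pos_iff.2 hLne
    have hln : (L.length : ℚ) ≤ (n : ℚ) := by exact_mod_cast hLlen
    have : 1 / (n:ℚ) ≤ 1 / (L.length : ℚ) := by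
      apply one_div_le_one_div_of_le hlen hln
    have hAX : 0 ≤ (A.card : ℚ) * X := le_of_lt hc
    calc 1 / (n:ℚ) * (A.card : ℚ) * X = 1 / (n:ℚ) * ((A.card : ℚ) * X) := by ring
      _ ≤ 1 / (L.length : ℚ) * ((A.card : ℚ) * X) := by
          apply mul_le_mul_of_nonneg_right this hAX
      _ = 1 / (L.length : ℚ) * (A.card : ℚ) * X := by ring

end AldousAux




/-- Aldous' vertex-boundary bound for Cayley graphs.  Let `G` act transitively on a
finite set `M`, let `S` be a generating set of `G` with `|S| = n`, and `A ⊆ M`.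
(i) Whenever `g` achieves `|gA \ A| ≥ |A|(1 − |A|/|M|)` and `g` is a word of length
`k` over `S`, there exists `s ∈ S` with `|sA \ A| ≥ (1/k)·|A|·(1 − |A|/|M|)`.
(ii) In particular, if every element of `G` is a word of length at most `n` in `S`,
there exists `s ∈ S` with `|sA \ A| ≥ (1/n)·|A|·(1 − |A|/|M|)`. -/
theorem stmt_3 {G M : Type*} [Group G] [Fintype G] [Fintype M] [DecidableEq M]
    [DecidableEq G] [MulAction G M] [MulAction.IsPretransitive G M]
    (S : Finset G) (n : ℕ) (hn : 0 < n) (hS : S.card = n)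
    (hgen : Subgroup.closure (S : Set G) = ⊤) (A : Finset M) :
    (∀ (g : G) (L : List G), (∀ x ∈ L, x ∈ S) → L.prod = g → L ≠ [] →
      (((A.image (g • ·)) \ A).card : ℚ)
          ≥ (A.card : ℚ) * (1 - (A.card : ℚ) / (Fintype.card M : ℚ)) →
      ∃ s ∈ S, (((A.image (s • ·)) \ A).card : ℚ)
          ≥ (1 / (L.length : ℚ)) * (A.card : ℚ)
              * (1 - (A.card : ℚ) / (Fintype.card M : ℚ)))
    ∧ ((∀ g : G, ∃ L : List G, (∀ x ∈ L, x ∈ S) ∧ L.length ≤ n ∧ L.prod = g) →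
      ∃ s ∈ S, (((A.image (s • ·)) \ A).card : ℚ)
          ≥ (1 / (n : ℚ)) * (A.card : ℚ)
              * (1 - (A.card : ℚ) / (Fintype.card M : ℚ))) := by
  exact stmt_3' S n hn hS hgen A
end
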